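/- Let W be a word over an ordered alphabet that is not n-divisible. If W contains 2n−1 pairwise disjoint subwords of the form x^{p_1}v'_1, ..., x^{p_{2n-1}}v'_{2n-1} where each p_i > n, x is a fixed word, and each v'_i is a word of length |x| comparable with but different from x, then among the v'_i there are n that are all lexicographically greater than x or n that are all lexicographically smaller than x; in the former case W contains the n disjoint subwords v'_1, x v'_2, x^2 v'_3, ..., x^{n-1} v'_n occurring left to right in strictly decreasing lexicographic order, so W is n-divisible — a contradiction. -/

import Mathlib

/-- A word `W` over an ordered alphabet is `n`-divisible if
`W = v ++ u_1 ++ ⋯ ++ u_n` with the `u_i` nonempty and strictly decreasing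
in the lexicographic order. -/
def IsMDivisible {α : Type*} [LT α] (m : ℕ) (W : List α) : Prop :=
  ∃ (v : List α) (us : List (List α)), us.length = m ∧ (∀ u ∈ us, u ≠ []) ∧
    W = v ++ us.flatten ∧ us.Chain' (fun a b => b < a)

section Aux

variable {α : Type*} [LinearOrder α] {β : Type*}

private lemma lex_append_right' : ∀ {a b : List α}, List.Lex (· < ·) a b →
    a.length = b.length → ∀ s t : List α, List.Lex (· < ·) (a ++ s) (b ++ t)
  | _, _, List.Lex.nil, hlen, _, _ => by simp at hlen
  | _, _, List.Lex.rel h, _, _, _ => List.Lex.rel h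
  | _, _, List.Lex.cons h, hlen, s, t =>
      List.Lex.cons (lex_append_right' h (by simpa using hlen) s t)

private lemma lex_append_left' (c : List α) {a b : List α}
    (h : List.Lex (· < ·) a b) : List.Lex (· < ·) (c ++ a) (c ++ b) := by
  induction c with
  | nil => exact h
  | cons hd tl ih => exact List.Lex.cons ih

private lemma lex_total' : ∀ (a b : List α), a ≠ b →
    List.Lex (· < ·) a b ∨ List.Lex (· < ·) b a
  | [], [], h => absurd rfl h
  | [], _ :: _, _ => Or.inl List.Lex.nil
  | _ :: _, [], _ => Or.inr List.Lex.nil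
  | a :: l, b :: m, h => by
    rcases lt_trichotomy a b with hab | rfl | hab
    · exact Or.inl (List.Lex.rel hab)
    · rcases lex_total' l m (by simpa using h) with h' | h'
      · exact Or.inl (List.Lex.cons h')
      · exact Or.inr (List.Lex.cons h')
    · exact Or.inr (List.Lex.rel hab)

private lemma len_rep (x : List β) (m : ℕ) :
    ((List.replicate m x).flatten).length = m * x.length := by
  induction m with
  | zero => simp
  | succ m ih => simp [List.replicate_succ, ih, Nat.succ_mul]; omega

private lemma glue (W : List β) {a b c : ℕ} (hab : a ≤ b) (hbc : b ≤ c) :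
    (W.take b).drop a ++ (W.take c).drop b = (W.take c).drop a := by
  rcases le_or_gt a W.length with h | h
  · conv_rhs => rw [← List.take_append_drop b (W.take c)]
    rw [List.take_take, min_eq_left hbc,
      List.drop_append_of_le_length (by rw [List.length_take]; exact le_min hab h)]
  · have h1 : (W.take b).drop a = [] :=
      List.drop_eq_nil_of_le (le_trans (List.length_take_le' _ _) h.le)
    have h2 : (W.take c).drop b = [] :=
      List.drop_eq_nil_of_le (le_trans (List.length_take_le' _ _) (le_trans h.le hab))
    have h3 : (W.take c).drop a = [] :=
      List.drop_eq_nil_of_le (le_trans (List.length_take_le' _ _) h.le)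
    rw [h1, h2, h3, List.nil_append]

private lemma q_le (q : ℕ → ℕ) : ∀ n : ℕ, (∀ k < n, q k ≤ q (k+1)) → q 0 ≤ q n
  | 0, _ => le_refl _
  | n+1, h => le_trans (q_le q n (fun k hk => h k (by omega))) (h n (by omega))

private lemma flatten_segments (W : List β) (q : ℕ → ℕ) :
    ∀ n : ℕ, (∀ k < n, q k ≤ q (k+1)) →
      ((List.range n).map (fun k => (W.take (q (k+1))).drop (q k))).flatten
        = (W.take (q n)).drop (q 0)
  | 0, _ => by
    simp [List.drop_eq_nil_of_le (le_trans (List.length_take_le _ _) (le_refl _))]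
  | n+1, h => by
    rw [List.range_succ, List.map_append, List.flatten_append,
      flatten_segments W q n (fun k hk => h k (by omega))]
    simp only [List.map_cons, List.map_nil, List.flatten_cons, List.flatten_nil,
      List.append_nil]
    exact glue W (q_le q n (fun k hk => h k (by omega))) (h n (by omega))

private lemma construct [LT β] (n : ℕ) (W : List β)
    (q : ℕ → ℕ) (c : ℕ → List β)
    (hc : ∀ k < n, c k ≠ [])
    (hpre : ∀ k < n, (W.drop (q k)).take (c k).length = c k)
    (hq : ∀ k < n, q k + (c k).length ≤ q (k+1))
    (hend : q n = W.length)
    (hlt : ∀ k, k + 1 < n → ∀ s t : List β, c (k+1) ++ t < c k ++ s) :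
    IsMDivisible n W := by
  have hmq : ∀ k < n, q k ≤ q (k+1) :=
    fun k hk => le_trans (Nat.le_add_right _ _) (hq k hk)
  set u : ℕ → List β := fun k => (W.take (q (k+1))).drop (q k) with hu_def
  have hu : ∀ k < n, ∃ r, u k = c k ++ r := by
    intro k hk
    refine ⟨((W.drop (q k)).drop (c k).length).take (q (k+1) - q k - (c k).length), ?_⟩
    have h2 : q (k+1) - q k = (c k).length + (q (k+1) - q k - (c k).length) := by
      have := hq k hk; omega
    show (W.take (q (k+1))).drop (q k) = _
    rw [List.drop_take, h2, List.take_add, hpre k hk, Nat.add_sub_cancel_left]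
  refine ⟨W.take (q 0), (List.range n).map u, by simp, ?_, ?_, ?_⟩
  · intro w hw
    simp only [List.mem_map, List.mem_range] at hw
    obtain ⟨k, hk, rfl⟩ := hw
    obtain ⟨r, hr⟩ := hu k hk
    intro hnil
    rw [hr, List.append_eq_nil_iff] at hnil
    exact hc k hk hnil.1
  · rw [flatten_segments W q n hmq, hend, List.take_length, List.take_append_drop]
  · rw [List.Chain', List.isChain_iff_getElem]
    intro i hi
    simp only [List.length_map, List.length_range] at hi
    have hi1 : i + 1 < n := by omega
    rw [List.getElem_map, List.getElem_map]
    simp only [List.get_eq_getElem, List.getElem_range]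
    obtain ⟨r, hr⟩ := hu i (by omega)
    obtain ⟨r', hr'⟩ := hu (i+1) hi1
    rw [hr, hr']
    exact hlt i hi1 r r'

private lemma occ_decomp (W x vj : List β) (pj posj e : ℕ) (he : e ≤ pj)
    (hocc : (W.drop posj).take ((List.replicate pj x).flatten ++ vj).length
        = (List.replicate pj x).flatten ++ vj) :
    (W.drop (posj + (pj - e) * x.length)).take
        ((List.replicate e x).flatten ++ vj).length
      = (List.replicate e x).flatten ++ vj := by
  have hsplit : (List.replicate pj x).flatten ++ vj
      = (List.replicate (pj - e) x).flatten ++ ((List.replicate e x).flatten ++ vj) := by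
    rw [← List.append_assoc, ← List.flatten_append, ← List.replicate_add]
    congr 3
    omega
  have h1 := congrArg (fun l : List β => l.drop ((pj - e) * x.length)) hocc
  rw [List.drop_take, List.drop_drop] at h1
  have hlen : ((List.replicate pj x).flatten ++ vj).length - (pj - e) * x.length
      = ((List.replicate e x).flatten ++ vj).length := by
    rw [List.length_append, List.length_append, len_rep, len_rep, Nat.sub_mul]
    have : e * x.length ≤ pj * x.length := Nat.mul_le_mul_right _ he
    omega
  rw [hlen] at h1
  rw [h1, hsplit, ← len_rep x (pj - e), List.drop_left]

end Aux

/-- If a non-`n`-divisible word `W` contains `2n-1` pairwise disjoint subwords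
`x^{p_i} v'_i` (occurring left to right), with all `p_i > n` and each `v'_i` a
word of length `|x|` different from `x`, then we get a contradiction: such a
configuration forces `n`-divisibility of `W`. -/
theorem stmt_18 {α : Type*} [LinearOrder α] (n : ℕ) (hn : 1 ≤ n)
    (W x : List α) (hx : x ≠ [])
    (hnd : ¬ IsMDivisible n W)
    (p : Fin (2 * n - 1) → ℕ) (hp : ∀ i, n < p i)
    (v : Fin (2 * n - 1) → List α)
    (hvlen : ∀ i, (v i).length = x.length) (hvx : ∀ i, v i ≠ x)
    (pos : Fin (2 * n - 1) → ℕ)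
    (hocc : ∀ i, (W.drop (pos i)).take ((List.replicate (p i) x).flatten ++ v i).length =
      (List.replicate (p i) x).flatten ++ v i)
    (hdisj : ∀ i j : Fin (2 * n - 1), i < j →
      pos i + ((List.replicate (p i) x).flatten ++ v i).length ≤ pos j) :
    False := by
  classical
  have hx0 : 0 < x.length := List.length_pos_iff.mpr hx
  have hL : ∀ i, ((List.replicate (p i) x).flatten ++ v i).length
      = p i * x.length + x.length := by
    intro i; rw [List.length_append, len_rep, hvlen]
  have hW : ∀ i, pos i + p i * x.length + x.length ≤ W.length := by
    intro i
    have h := congrArg List.length (hocc i)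
    rw [List.length_take, List.length_drop, hL i] at h
    have hp' := hp i
    omega
  -- pigeonhole
  set A : Finset (Fin (2*n-1)) :=
    Finset.univ.filter (fun i => List.Lex (· < ·) x (v i)) with hA_def
  set B : Finset (Fin (2*n-1)) :=
    Finset.univ.filter (fun i => List.Lex (· < ·) (v i) x) with hB_def
  have hAB : ∀ i, i ∈ A ∨ i ∈ B := by
    intro i
    rcases lex_total' x (v i) (fun h => hvx i h.symm) with h | h
    · exact Or.inl (by simp [hA_def]; exact h)
    · exact Or.inr (by simp [hB_def]; exact h)
  have hcard : n ≤ A.card ∨ n ≤ B.card := by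
    by_contra hcon
    push_neg at hcon
    have hunion : A ∪ B = Finset.univ :=
      Finset.eq_univ_iff_forall.mpr (fun i => Finset.mem_union.mpr (hAB i))
    have h1 := Finset.card_union_le A B
    rw [hunion, Finset.card_univ, Fintype.card_fin] at h1
    omega
  -- shared construction
  have key : ∀ (e : ℕ → ℕ) (I : Fin n → Fin (2*n-1)), StrictMono I →
      (∀ k, k < n → e k ≤ n) →
      ((∀ k, k + 1 < n → e (k+1) = e k + 1) ∧
          (∀ k (hk : k < n), List.Lex (· < ·) x (v (I ⟨k,hk⟩))) ∨
        (∀ k, k + 1 < n → e k = e (k+1) + 1) ∧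
          (∀ k (hk : k < n), List.Lex (· < ·) (v (I ⟨k,hk⟩)) x)) →
      IsMDivisible n W := by
    intro e I hImono he hcases
    set q : ℕ → ℕ := fun k =>
      if h : k < n then pos (I ⟨k,h⟩) + (p (I ⟨k,h⟩) - e k) * x.length else W.length
      with hq_def
    set c : ℕ → List α := fun k =>
      if h : k < n then (List.replicate (e k) x).flatten ++ v (I ⟨k,h⟩) else []
      with hc_def
    have hqsum : ∀ k (h : k < n),
        q k + (c k).length = pos (I ⟨k,h⟩) + p (I ⟨k,h⟩) * x.length + x.length := by
      intro k h
      have hek : e k ≤ p (I ⟨k,h⟩) := le_trans (he k h) (hp _).le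
      have hmul : e k * x.length ≤ p (I ⟨k,h⟩) * x.length := Nat.mul_le_mul_right _ hek
      simp only [hq_def, hc_def, dif_pos h, List.length_append, len_rep, hvlen,
        Nat.sub_mul]
      omega
    have hq : ∀ k < n, q k + (c k).length ≤ q (k+1) := by
      intro k hk
      rw [hqsum k hk]
      by_cases h1 : k + 1 < n
      · have hlt : I ⟨k, hk⟩ < I ⟨k+1, h1⟩ := hImono (by simp [Fin.lt_def])
        have hd := hdisj _ _ hlt
        rw [hL] at hd
        simp only [hq_def, dif_pos h1]
        omega
      · have : q (k+1) = W.length := by simp [hq_def, dif_neg (by omega : ¬ k + 1 < n)]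
        rw [this]
        exact hW _
    refine construct n W q c ?_ ?_ hq (by simp [hq_def]) ?_
    · intro k hk
      simp only [hc_def, dif_pos hk]
      intro hnil
      rw [List.append_eq_nil_iff] at hnil
      have := hvlen (I ⟨k, hk⟩)
      rw [hnil.2] at this
      simp at this
      omega
    · intro k hk
      simp only [hq_def, hc_def, dif_pos hk]
      have := occ_decomp W x (v (I ⟨k,hk⟩)) (p (I ⟨k,hk⟩)) (pos (I ⟨k,hk⟩)) (e k)
        (le_trans (he k hk) (hp _).le) (hocc (I ⟨k,hk⟩))
      simpa using this
    · intro k hk1 s t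
      have hk : k < n := by omega
      show List.Lex (· < ·) (c (k+1) ++ t) (c k ++ s)
      simp only [hc_def, dif_pos hk1, dif_pos hk]
      rcases hcases with ⟨hstep, hord⟩ | ⟨hstep, hord⟩
      · -- increasing exponent, x < v i
        have hrw : (List.replicate (e (k+1)) x).flatten
            = (List.replicate (e k) x).flatten ++ x := by
          rw [hstep k hk1, List.replicate_succ', List.flatten_append]
          simp
        rw [hrw]
        have h0 : List.Lex (· < ·) (x ++ (v (I ⟨k+1, hk1⟩) ++ t))
            (v (I ⟨k, hk⟩) ++ s) :=
          lex_append_right' (hord k hk) (hvlen _).symm _ _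
        simpa [List.append_assoc] using
          lex_append_left' ((List.replicate (e k) x).flatten) h0
      · -- decreasing exponent, v i < x
        have hrw : (List.replicate (e k) x).flatten
            = (List.replicate (e (k+1)) x).flatten ++ x := by
          rw [hstep k hk1, List.replicate_succ', List.flatten_append]
          simp
        rw [hrw]
        have h0 : List.Lex (· < ·) (v (I ⟨k+1, hk1⟩) ++ t)
            (x ++ (v (I ⟨k, hk⟩) ++ s)) :=
          lex_append_right' (hord (k+1) hk1) (hvlen _) _ _
        simpa [List.append_assoc] using
          lex_append_left' ((List.replicate (e (k+1)) x).flatten) h0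
  -- now the two pigeonhole cases
  rcases hcard with hA | hB
  · obtain ⟨S, hSA, hScard⟩ := Finset.exists_subset_card_eq hA
    set σ := S.orderIsoOfFin hScard with hσ
    set I : Fin n → Fin (2*n-1) := fun k => (σ k : Fin (2*n-1)) with hI
    have hImono : StrictMono I := fun a b hab => Subtype.coe_lt_coe.mpr (σ.strictMono hab)
    refine hnd (key (fun k => k) I hImono (fun k hk => hk.le) (Or.inl ⟨fun _ _ => rfl, ?_⟩))
    intro k hk
    have : I ⟨k, hk⟩ ∈ A := hSA (σ ⟨k, hk⟩).2
    simpa [hA_def] using this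
  · obtain ⟨S, hSB, hScard⟩ := Finset.exists_subset_card_eq hB
    set σ := S.orderIsoOfFin hScard with hσ
    set I : Fin n → Fin (2*n-1) := fun k => (σ k : Fin (2*n-1)) with hI
    have hImono : StrictMono I := fun a b hab => Subtype.coe_lt_coe.mpr (σ.strictMono hab)
    refine hnd (key (fun k => n - k) I hImono (fun k hk => Nat.sub_le _ _)
      (Or.inr ⟨fun k hk => by omega, ?_⟩))
    intro k hk
    have : I ⟨k, hk⟩ ∈ B := hSB (σ ⟨k, hk⟩).2
    simpa [hB_def] using this
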